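/- Let k be a field of prime characteristic p, let S = k[x_1,…,x_N] be the standard graded polynomial ring, and let f_1,…,f_t be a regular sequence of homogeneous polynomials of positive degree in S. Set R = S/(f_1,…,f_t) with homogeneous maximal ideal m (the image of (x_1,…,x_N)). For q = p^e define ν(q) = max{ r ∈ ℕ : m^r ⊄ m^{[q]} }. Then the limit c(R) = lim_{e→∞} ν(p^e)/p^e exists and satisfies c(R) ≥ N − (deg f_1 + ⋯ + deg f_t); that is, c(R) ≥ −a(R), where a(R) = Σ_i deg f_i − N is the a-invariant of R. -/

import Mathlib

set_option synthInstance.maxHeartbeats 1000000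
set_option maxHeartbeats 1000000

open MvPolynomial

/-- The `q`-th Frobenius power of an ideal: the ideal generated by the `q`-th powers of
its elements. -/
noncomputable def frobPow {R : Type*} [CommRing R] (I : Ideal R) (q : ℕ) : Ideal R :=
  Ideal.span ((fun a => a ^ q) '' (I : Set R))

/-- `nu m J = max { r ∈ ℕ : m^r ⊄ J }`, the top socle degree of `R/J`. -/
noncomputable def nu {R : Type*} [CommRing R] (m J : Ideal R) : ℕ :=
  sSup {r : ℕ | ¬ m ^ r ≤ J}

namespace DFTaux

variable {k : Type*} [Field k] {N : ℕ}

/-- total degree of an exponent vector -/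
def dsum (α : Fin N →₀ ℕ) : ℕ := ∑ i : Fin N, α i

lemma dsum_eq_degree (α : Fin N →₀ ℕ) : dsum α = α.degree := by
  rw [Finsupp.degree, dsum]
  exact (Finset.sum_subset (Finset.subset_univ _)
    (fun i _ hi => Finsupp.notMem_support_iff.mp hi)).symm

lemma dsum_add (α β : Fin N →₀ ℕ) : dsum (α + β) = dsum α + dsum β := by
  simp [dsum, Finset.sum_add_distrib]

lemma dsum_single (i : Fin N) (c : ℕ) : dsum (Finsupp.single i c) = c := by
  simp [dsum, Finsupp.single_apply]

noncomputable abbrev mS (k : Type*) [Field k] (N : ℕ) : Ideal (MvPolynomial (Fin N) k) :=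
  Ideal.span (Set.range X)

noncomputable abbrev Jq (k : Type*) [Field k] (N : ℕ) (q : ℕ) : Ideal (MvPolynomial (Fin N) k) :=
  Ideal.span (Set.range fun i => (X i : MvPolynomial (Fin N) k) ^ q)

lemma monomial_mem_Jq {q : ℕ} {α : Fin N →₀ ℕ} (c : k) {i : Fin N} (hi : q ≤ α i) :
    monomial α c ∈ Jq k N q := by
  have : monomial α c = monomial (α - Finsupp.single i q) c * (X i) ^ q := by
    rw [X_pow_eq_monomial, monomial_mul, mul_one, tsub_add_cancel_of_le]
    rwa [Finsupp.single_le_iff]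
  rw [this]
  exact Ideal.mul_mem_left _ _ (Ideal.subset_span ⟨i, rfl⟩)

lemma mem_Jq_iff {q : ℕ} (g : MvPolynomial (Fin N) k) :
    g ∈ Jq k N q ↔ ∀ α ∈ g.support, ∃ i, q ≤ α i := by
  constructor
  · intro hg α hα
    rw [Jq, Ideal.mem_span_range_iff_exists_fun] at hg
    obtain ⟨cf, hcf⟩ := hg
    have hcoeff : coeff α g ≠ 0 := mem_support_iff.mp hα
    rw [← hcf] at hcoeff
    rw [coeff_sum] at hcoeff
    obtain ⟨i, -, hi⟩ := Finset.exists_ne_zero_of_sum_ne_zero hcoeff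
    rw [X_pow_eq_monomial, coeff_mul_monomial'] at hi
    by_contra hcon
    push_neg at hcon
    rw [if_neg] at hi
    · exact hi rfl
    · intro hle
      exact absurd (Finsupp.single_le_iff.mp hle) (Nat.not_le.mpr (hcon i))
  · intro hall
    rw [g.as_sum]
    refine Ideal.sum_mem _ (fun α hα => ?_)
    obtain ⟨i, hi⟩ := hall α hα
    exact monomial_mem_Jq _ hi

lemma mS_le_ker : mS k N ≤ RingHom.ker (constantCoeff (σ := Fin N) (R := k)) := by
  rw [mS, Ideal.span_le]
  rintro _ ⟨i, rfl⟩
  simp [RingHom.mem_ker]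

lemma one_not_mem_mS : (1 : MvPolynomial (Fin N) k) ∉ mS k N := by
  intro h
  have := mS_le_ker h
  rw [RingHom.mem_ker, map_one] at this
  exact one_ne_zero this

lemma monomial_mem_mS_pow {r : ℕ} {α : Fin N →₀ ℕ} (hα : dsum α = r) :
    monomial α (1 : k) ∈ (mS k N) ^ r := by
  induction r generalizing α with
  | zero => simp
  | succ r ih =>
    have hα0 : α ≠ 0 := by
      intro h
      rw [h] at hα
      simp [dsum] at hα
    obtain ⟨i, hi⟩ : ∃ i, 0 < α i := by
      by_contra hcon
      push_neg at hcon
      exact hα0 (Finsupp.ext fun i => Nat.le_zero.mp (hcon i))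
    have hle : Finsupp.single i 1 ≤ α := by
      rwa [Finsupp.single_le_iff]
    have hdec : dsum (α - Finsupp.single i 1) = r := by
      have := dsum_add (α - Finsupp.single i 1) (Finsupp.single i 1)
      rw [tsub_add_cancel_of_le hle, hα, dsum_single] at this
      omega
    have : monomial α (1 : k) = monomial (α - Finsupp.single i 1) 1 * X i := by
      rw [X, monomial_mul, mul_one, tsub_add_cancel_of_le hle]
    rw [this, pow_succ]
    exact Ideal.mul_mem_mul (ih hdec) (Ideal.subset_span ⟨i, rfl⟩)

lemma mS_pow_le (r : ℕ) :
    (mS k N) ^ r ≤ Ideal.span {g : MvPolynomial (Fin N) k | ∃ α, dsum α = r ∧ g = monomial α 1} := by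
  induction r with
  | zero =>
    have : (1 : MvPolynomial (Fin N) k) ∈
        Ideal.span {g : MvPolynomial (Fin N) k | ∃ α, dsum α = 0 ∧ g = monomial α 1} := by
      refine Ideal.subset_span ⟨0, ?_, by simp⟩
      simp [dsum]
    simp only [pow_zero]
    exact fun x _ => by simpa using Ideal.mul_mem_left _ x this
  | succ r ih =>
    rw [pow_succ]
    calc (mS k N) ^ r * mS k N
        ≤ Ideal.span {g : MvPolynomial (Fin N) k | ∃ α, dsum α = r ∧ g = monomial α 1} * mS k N :=
          Ideal.mul_mono_left ih
      _ ≤ _ := by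
          rw [mS, Ideal.span_mul_span, Ideal.span_le]
          rintro x hx
          simp only [Set.mem_mul] at hx
          obtain ⟨s, ⟨α, hα, rfl⟩, t, ⟨i, rfl⟩, hx⟩ := hx
          subst hx
          refine Ideal.subset_span ⟨α + Finsupp.single i 1, ?_, ?_⟩
          · rw [dsum_add, hα, dsum_single]
          · rw [X, monomial_mul, mul_one]

lemma mS_pow_le_iff {r : ℕ} {I : Ideal (MvPolynomial (Fin N) k)} :
    (mS k N) ^ r ≤ I ↔ ∀ α : Fin N →₀ ℕ, dsum α = r → monomial α (1:k) ∈ I := by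
  constructor
  · intro h α hα
    exact h (monomial_mem_mS_pow hα)
  · intro h
    refine le_trans (mS_pow_le r) ?_
    rw [Ideal.span_le]
    rintro x ⟨α, hα, rfl⟩
    exact h α hα



lemma mem_mS_of_isHomogeneous {g : MvPolynomial (Fin N) k} {d : ℕ}
    (hg : g.IsHomogeneous d) (hd : 0 < d) : g ∈ mS k N := by
  rw [g.as_sum]
  refine Ideal.sum_mem _ (fun α hα => ?_)
  have hdeg : α.degree = d := hg.coeff_eq_zero (d := α) |> fun h => by
    by_contra hne
    exact mem_support_iff.mp hα (h hne)
  have hα0 : dsum α ≠ 0 := by rw [dsum_eq_degree, hdeg]; omega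
  obtain ⟨i, hi⟩ : ∃ i, 0 < α i := by
    by_contra hcon
    push_neg at hcon
    exact hα0 (by simp [dsum, fun i => Nat.le_zero.mp (hcon i)])
  have hle : Finsupp.single i 1 ≤ α := by rwa [Finsupp.single_le_iff]
  have : monomial α (coeff α g) = monomial (α - Finsupp.single i 1) (coeff α g) * X i := by
    rw [X, monomial_mul, mul_one, tsub_add_cancel_of_le hle]
  rw [this]
  exact Ideal.mul_mem_left _ _ (Ideal.subset_span ⟨i, rfl⟩)

lemma X_pow_mem_mS {q : ℕ} (hq : 0 < q) (i : Fin N) :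
    (X i : MvPolynomial (Fin N) k) ^ q ∈ mS k N :=
  mem_mS_of_isHomogeneous (by simpa using (isHomogeneous_X k i).pow q) hq

variable (p : ℕ) [Fact p.Prime] [CharP k p]

lemma pow_q_mem_Jq {b : MvPolynomial (Fin N) k} (hb : b ∈ mS k N) (e : ℕ) :
    b ^ (p ^ e) ∈ Jq k N (p ^ e) := by
  haveI : ExpChar (MvPolynomial (Fin N) k) p := .prime (Fact.out)
  rw [mS, Ideal.mem_span_range_iff_exists_fun] at hb
  obtain ⟨c, hc⟩ := hb
  rw [← hc, sum_pow_char_pow]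
  refine Ideal.sum_mem _ (fun i _ => ?_)
  rw [mul_pow]
  exact Ideal.mul_mem_left _ _ (Ideal.subset_span ⟨i, rfl⟩)

lemma pow_p_mem {C : Ideal (MvPolynomial (Fin N) k)} {q : ℕ}
    {a : MvPolynomial (Fin N) k} (ha : a ∈ C ⊔ Jq k N q) :
    a ^ p ∈ C ⊔ Jq k N (q * p) := by
  haveI : ExpChar (MvPolynomial (Fin N) k) p := .prime (Fact.out)
  obtain ⟨c, hc, j, hj, rfl⟩ := Submodule.mem_sup.mp ha
  rw [add_pow_char]
  refine Ideal.add_mem _ (Ideal.mem_sup_left (Ideal.pow_mem_of_mem _ hc _ (Fact.out : p.Prime).pos)) ?_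
  refine Ideal.mem_sup_right ?_
  rw [Jq, Ideal.mem_span_range_iff_exists_fun] at hj
  obtain ⟨c', hc'⟩ := hj
  rw [← hc', sum_pow_char]
  refine Ideal.sum_mem _ (fun i _ => ?_)
  rw [mul_pow, ← pow_mul]
  exact Ideal.mul_mem_left _ _ (Ideal.subset_span ⟨i, rfl⟩)

/-- key division/expansion step -/
lemma step_le {C : Ideal (MvPolynomial (Fin N) k)} {q r : ℕ}
    (h : (mS k N) ^ r ≤ C ⊔ Jq k N q) :
    (mS k N) ^ (p * r + N * (p - 1)) ≤ C ⊔ Jq k N (q * p) := by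
  have hp : 0 < p := (Fact.out : p.Prime).pos
  rw [mS_pow_le_iff]
  intro α hα
  set β : Fin N →₀ ℕ := α.mapRange (· / p) (Nat.zero_div p) with hβ
  have hβle : p • β ≤ α := by
    intro i
    simp only [Finsupp.smul_apply, smul_eq_mul, hβ, Finsupp.mapRange_apply]
    calc p * (α i / p) = α i / p * p := mul_comm _ _
      _ ≤ α i := Nat.div_mul_le_self _ _
  have hρ : ∀ i, (α - p • β) i ≤ p - 1 := by
    intro i
    simp only [Finsupp.tsub_apply, Finsupp.smul_apply, smul_eq_mul, hβ, Finsupp.mapRange_apply]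
    have h1 := Nat.mod_lt (α i) hp
    have h2 := Nat.div_add_mod' (α i) p
    have h3 := Nat.div_add_mod (α i) p
    omega
  have hdρ : dsum (α - p • β) ≤ N * (p - 1) := by
    calc dsum (α - p • β) = ∑ i : Fin N, (α - p • β) i := rfl
      _ ≤ ∑ _i : Fin N, (p - 1) := Finset.sum_le_sum (fun i _ => hρ i)
      _ = N * (p - 1) := by simp [Finset.sum_const, Finset.card_univ, mul_comm]
  have hsplit : p • β + (α - p • β) = α := add_tsub_cancel_of_le hβle
  have hdβ : r ≤ dsum β := by
    have h1 : dsum (p • β) + dsum (α - p • β) = dsum α := by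
      rw [← dsum_add, hsplit]
    have h2 : dsum (p • β) = p * dsum β := by
      simp [dsum, Finset.mul_sum]
    rw [hα, h2] at h1
    by_contra hcon
    push_neg at hcon
    have := (Nat.mul_lt_mul_left hp).mpr hcon
    omega
  have hmem : monomial β (1:k) ∈ C ⊔ Jq k N q := by
    refine (Ideal.pow_le_pow_right hdβ).trans h (monomial_mem_mS_pow rfl)
  have hmemp : (monomial β (1:k)) ^ p ∈ C ⊔ Jq k N (q * p) := pow_p_mem p hmem
  have heq : monomial α (1:k) = monomial (α - p • β) 1 * (monomial β 1) ^ p := by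
    rw [monomial_pow, monomial_mul, one_pow, mul_one, add_comm, hsplit]
  rw [heq]
  exact Ideal.mul_mem_left _ _ hmemp


section frob
variable (p : ℕ) [Fact p.Prime] [CharP k p]

/-- frobenius power of the max ideal downstairs equals the image of Jq -/
lemma frobPow_eq (C : Ideal (MvPolynomial (Fin N) k)) (e : ℕ) :
    frobPow ((mS k N).map (Ideal.Quotient.mk C)) (p ^ e) =
      (Jq k N (p ^ e)).map (Ideal.Quotient.mk C) := by
  apply le_antisymm
  · rw [frobPow, Ideal.span_le]
    rintro _ ⟨a, ha, rfl⟩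
    obtain ⟨b, hb, rfl⟩ := Ideal.mem_map_iff_of_surjective _ Ideal.Quotient.mk_surjective |>.mp ha
    show (Ideal.Quotient.mk C b) ^ (p ^ e) ∈ _
    rw [← map_pow]
    exact Ideal.mem_map_of_mem _ (pow_q_mem_Jq p hb e)
  · rw [Jq, Ideal.map_span, Ideal.span_le]
    rintro _ ⟨_, ⟨i, rfl⟩, rfl⟩
    refine Ideal.subset_span ⟨Ideal.Quotient.mk C (X i), ?_, by rw [map_pow]⟩
    exact Ideal.mem_map_of_mem _ (Ideal.subset_span ⟨i, rfl⟩)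

lemma nu_eq (C : Ideal (MvPolynomial (Fin N) k)) (e : ℕ) :
    nu ((mS k N).map (Ideal.Quotient.mk C))
       (frobPow ((mS k N).map (Ideal.Quotient.mk C)) (p ^ e)) =
    sSup {r : ℕ | ¬ (mS k N) ^ r ≤ C ⊔ Jq k N (p ^ e)} := by
  rw [nu, frobPow_eq]
  congr 1
  ext r
  simp only [Set.mem_setOf_eq]
  rw [← Ideal.map_pow, Ideal.map_le_iff_le_comap,
    Ideal.comap_map_of_surjective _ Ideal.Quotient.mk_surjective,
    ← RingHom.ker_eq_comap_bot, Ideal.mk_ker, sup_comm]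

end frob

section Tset

variable {t : ℕ} (f : Fin t → MvPolynomial (Fin N) k) (df : Fin t → ℕ)

/-- The set is bounded above by N*(q-1). -/
lemma T_bddAbove {q : ℕ} (hq : 0 < q) (C : Ideal (MvPolynomial (Fin N) k)) :
    ∀ r ∈ {r : ℕ | ¬ (mS k N) ^ r ≤ C ⊔ Jq k N q}, r ≤ N * (q - 1) := by
  intro r hr
  by_contra hcon
  push_neg at hcon
  apply hr
  refine le_trans ?_ le_sup_right
  rw [mS_pow_le_iff]
  intro α hα
  obtain ⟨i, hi⟩ : ∃ i, q ≤ α i := by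
    by_contra hc
    push_neg at hc
    have : dsum α ≤ N * (q - 1) := by
      calc dsum α = ∑ i : Fin N, α i := rfl
        _ ≤ ∑ _i : Fin N, (q-1) := Finset.sum_le_sum (fun i _ => by have := hc i; omega)
        _ = N * (q-1) := by simp [mul_comm]
    omega
  exact monomial_mem_Jq _ hi

lemma T_zero_mem {q : ℕ} (hq : 0 < q) (C : Ideal (MvPolynomial (Fin N) k))
    (hCm : C ≤ mS k N) :
    (0 : ℕ) ∈ {r : ℕ | ¬ (mS k N) ^ r ≤ C ⊔ Jq k N q} := by
  simp only [Set.mem_setOf_eq, pow_zero, Ideal.one_eq_top]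
  intro h
  have h1 : (1 : MvPolynomial (Fin N) k) ∈ C ⊔ Jq k N q := h Submodule.mem_top
  have hsub : C ⊔ Jq k N q ≤ mS k N := by
    refine sup_le hCm ?_
    rw [Jq, Ideal.span_le]
    rintro _ ⟨i, rfl⟩
    exact X_pow_mem_mS hq i
  exact one_not_mem_mS (hsub h1)

end Tset

lemma one_not_mem_Jq {q : ℕ} (hq : 0 < q) : (1 : MvPolynomial (Fin N) k) ∉ Jq k N q := by
  intro h
  have hsub : Jq k N q ≤ mS k N := by
    rw [Jq, Ideal.span_le]
    rintro _ ⟨i, rfl⟩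
    exact X_pow_mem_mS hq i
  exact one_not_mem_mS (hsub h)

/-- sub-vector existence -/
lemma exists_le_dsum (β : Fin N →₀ ℕ) (m : ℕ) (hm : m ≤ dsum β) :
    ∃ μ : Fin N →₀ ℕ, μ ≤ β ∧ dsum μ = m := by
  induction m with
  | zero => exact ⟨0, zero_le, by simp [dsum]⟩
  | succ m ih =>
    obtain ⟨μ, hle, hdeg⟩ := ih (by omega)
    obtain ⟨i, hi⟩ : ∃ i, μ i < β i := by
      by_contra hcon
      push_neg at hcon
      have : dsum β ≤ dsum μ := Finset.sum_le_sum (fun i _ => hcon i)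
      omega
    refine ⟨μ + Finsupp.single i 1, ?_, ?_⟩
    · intro j
      simp only [Finsupp.add_apply, Finsupp.single_apply]
      rcases eq_or_ne i j with rfl | hne
      · simpa using hi
      · simp only [if_neg hne, add_zero]
        exact hle j
    · simp only [dsum] at hdeg ⊢
      simp only [Finsupp.add_apply, Finset.sum_add_distrib]
      have : ∑ j : Fin N, Finsupp.single i 1 j = 1 := by
        simp [Finsupp.single_apply]
      omega

section LB
variable (p : ℕ) [Fact p.Prime] [CharP k p]
variable {t : ℕ} (f : Fin t → MvPolynomial (Fin N) k) (df : Fin t → ℕ)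

open Classical in
/-- Greedy construction of the multiplier h. -/
lemma exists_multiplier (hdfpos : ∀ i, 0 < df i) (hfhom : ∀ i, (f i).IsHomogeneous (df i))
    (e : ℕ) :
    ∃ (h : MvPolynomial (Fin N) k) (dh : ℕ), h.IsHomogeneous dh ∧
      dh ≤ (p ^ e - 1) * ∑ i : Fin t, df i ∧ h ∉ Jq k N (p ^ e) ∧
      ∀ i : Fin t, h * f i ∈ Jq k N (p ^ e) := by
  set q := p ^ e with hq
  have hq1 : 0 < q := Nat.pow_pos (Fact.out : p.Prime).pos
  suffices H : ∀ s : Finset (Fin t), ∃ (h : MvPolynomial (Fin N) k) (dh : ℕ),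
      h.IsHomogeneous dh ∧ dh ≤ (q - 1) * ∑ i ∈ s, df i ∧ h ∉ Jq k N q ∧
      ∀ i ∈ s, h * f i ∈ Jq k N q by
    obtain ⟨h, dh, h1, h2, h3, h4⟩ := H Finset.univ
    exact ⟨h, dh, h1, h2, h3, fun i => h4 i (Finset.mem_univ i)⟩
  intro s
  induction s using Finset.induction_on with
  | empty =>
    exact ⟨1, 0, isHomogeneous_one _ _, by simp, one_not_mem_Jq hq1, by simp⟩
  | @insert a s ha ih =>
    obtain ⟨h, dh, h1, h2, h3, h4⟩ := ih
    set P : ℕ → Prop := fun j => h * f a ^ j ∉ Jq k N q with hP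
    have hP0 : P 0 := by simpa [hP] using h3
    set K := Nat.findGreatest P (q - 1) with hK
    have hPK : P K := Nat.findGreatest_spec (Nat.zero_le _) hP0
    have hKle : K ≤ q - 1 := Nat.findGreatest_le _
    refine ⟨h * f a ^ K, dh + df a * K, h1.mul ((hfhom a).pow K), ?_, hPK, ?_⟩
    · rw [Finset.sum_insert ha, Nat.mul_add]
      have : df a * K ≤ (q - 1) * df a := by
        rw [mul_comm]
        exact Nat.mul_le_mul_right _ hKle
      omega
    · intro i hi
      rcases Finset.mem_insert.mp hi with rfl | his
      · have hiq : h * f i ^ (K + 1) ∈ Jq k N q := by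
          rcases Nat.lt_or_ge K (q - 1) with hlt | hge
          · have h5 := Nat.findGreatest_is_greatest (Nat.lt_succ_self K) (by omega : K + 1 ≤ q - 1)
            simpa [hP, not_not] using h5
          · have hKq : K + 1 = q := by omega
            rw [hKq]
            have hfq : f i ^ q ∈ Jq k N q := by
              rw [hq]
              exact pow_q_mem_Jq p (mem_mS_of_isHomogeneous (hfhom i) (hdfpos i)) e
            exact Ideal.mul_mem_left _ _ hfq
        have : h * f i ^ K * f i = h * f i ^ (K + 1) := by ring
        rw [this]
        exact hiq
      · have : h * f a ^ K * f i = (h * f i) * f a ^ K := by ring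
        rw [this]
        exact Ideal.mul_mem_right _ _ (h4 i his)

/-- The lower bound: (N - D) * (q - 1) is in the T-set (when D ≤ N). -/
lemma lower_bound (hdfpos : ∀ i, 0 < df i) (hfhom : ∀ i, (f i).IsHomogeneous (df i))
    (C : Ideal (MvPolynomial (Fin N) k)) (hC : C = Ideal.span (Set.range f))
    (e : ℕ) (hDN : ∑ i : Fin t, df i ≤ N) :
    ¬ (mS k N) ^ ((N - ∑ i : Fin t, df i) * (p ^ e - 1)) ≤ C ⊔ Jq k N (p ^ e) := by
  intro hcon
  set q := p ^ e with hq
  have hq1 : 0 < q := Nat.pow_pos (Fact.out : p.Prime).pos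
  set D := ∑ i : Fin t, df i with hD
  set r₀ := (N - D) * (q - 1) with hr₀
  obtain ⟨h, dh, hhom, hdh, hnot, hmul⟩ := exists_multiplier p f df hdfpos hfhom e
  -- pick γ in support of h with all exponents < q
  obtain ⟨γ, hγsup, hγlt⟩ : ∃ γ ∈ h.support, ∀ i, γ i < q := by
    by_contra hcon2
    push_neg at hcon2
    exact hnot ((mem_Jq_iff h).mpr (fun α hα => hcon2 α hα))
  have hγdeg : dsum γ = dh := by
    rw [dsum_eq_degree]
    by_contra hne
    exact mem_support_iff.mp hγsup (hhom.coeff_eq_zero hne)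
  -- the complement vector
  set β : Fin N →₀ ℕ := Finsupp.equivFunOnFinite.symm (fun i => q - 1 - γ i) with hβ
  have hβapp : ∀ i, β i = q - 1 - γ i := fun i => rfl
  have hdsumβ : r₀ ≤ dsum β := by
    have hsum : dsum β + dsum γ = N * (q-1) := by
      rw [dsum, dsum, ← Finset.sum_add_distrib]
      have : ∀ i : Fin N, β i + γ i = q - 1 := by
        intro i
        have := hγlt i
        rw [hβapp]
        omega
      simp only [this]
      simp [mul_comm]
    have hdhD : dh ≤ (q-1) * D := hdh
    have : r₀ = (N - D) * (q-1) := rfl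
    have hNq : (N - D) * (q - 1) + D * (q-1) = N * (q-1) := by
      rw [← Nat.add_mul]
      congr 1
      omega
    have : dh ≤ D * (q-1) := by rw [mul_comm] at hdhD; exact hdhD
    omega
  obtain ⟨μ, hμle, hμdeg⟩ := exists_le_dsum β r₀ hdsumβ
  -- the monomial x^μ is in mS^r₀ hence in C ⊔ Jq
  have hμmem : monomial μ (1:k) ∈ C ⊔ Jq k N q := hcon (monomial_mem_mS_pow hμdeg)
  -- h * x^μ ∈ Jq
  have hhmul : h * monomial μ (1:k) ∈ Jq k N q := by
    obtain ⟨c, hc, j, hj, hcj⟩ := Submodule.mem_sup.mp hμmem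
    have hhc : h * c ∈ Jq k N q := by
      rw [hC] at hc
      refine Submodule.span_induction ?_ ?_ ?_ ?_ hc
      · rintro x ⟨i, rfl⟩
        exact hmul i
      · simp
      · intro x y _ _ hx hy
        rw [mul_add]
        exact Ideal.add_mem _ hx hy
      · intro a x _ hx
        rw [smul_eq_mul]
        have hrw : h * (a * x) = a * (h * x) := by ring
        rw [hrw]
        exact Ideal.mul_mem_left _ _ hx
    rw [← hcj, mul_add]
    exact Ideal.add_mem _ hhc (Ideal.mul_mem_left _ _ hj)
  -- but coefficient at γ + μ is nonzero and all exponents < q: contradiction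
  have hcoeff : coeff (γ + μ) (h * monomial μ (1:k)) = coeff γ h := by
    rw [coeff_mul_monomial, mul_one]
  have hne : coeff (γ + μ) (h * monomial μ (1:k)) ≠ 0 := by
    rw [hcoeff]
    exact mem_support_iff.mp hγsup
  obtain ⟨i, hi⟩ := (mem_Jq_iff _).mp hhmul (γ + μ) (mem_support_iff.mpr hne)
  have h1 : μ i ≤ β i := hμle i
  have h2 : β i = q - 1 - γ i := hβapp i
  have h3 : γ i < q := hγlt i
  simp only [Finsupp.add_apply] at hi
  omega

end LB

end DFTaux

open DFTaux Filter

/-- **The diagonal F-threshold of a graded complete intersection exists and is at least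
`−a(R)`.**  For `R = k[x_1,…,x_N]/(f_1,…,f_t)` with the `f_i` a homogeneous regular
sequence of positive degrees, the limit `c(R) = lim ν(p^e)/p^e` (where
`ν(q) = max { r : m^r ⊄ m^{[q]} }`) exists and satisfies
`c(R) ≥ N − (deg f_1 + ⋯ + deg f_t) = −a(R)`. -/
theorem diagonalFThreshold_ge_neg_aInvariant
    (p : ℕ) (hp : p.Prime) (k : Type*) [Field k] [CharP k p]
    (N t : ℕ) (f : Fin t → MvPolynomial (Fin N) k) (df : Fin t → ℕ)
    (hdfpos : ∀ i, 0 < df i)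
    (hfhom : ∀ i, (f i).IsHomogeneous (df i))
    -- `f` is a regular sequence: each `f i` is a nonzerodivisor modulo its predecessors
    (hreg : ∀ (i : Fin t) (g : MvPolynomial (Fin N) k),
        g * f i ∈ Ideal.span (f '' {j | j < i}) → g ∈ Ideal.span (f '' {j | j < i}))
    (C : Ideal (MvPolynomial (Fin N) k)) (hC : C = Ideal.span (Set.range f)) :
    ∃ c : ℝ,
      Filter.Tendsto
        (fun e : ℕ =>
          (nu ((Ideal.span (Set.range (X : Fin N → MvPolynomial (Fin N) k))).map
                (Ideal.Quotient.mk C))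
              (frobPow
                ((Ideal.span (Set.range (X : Fin N → MvPolynomial (Fin N) k))).map
                  (Ideal.Quotient.mk C))
                (p ^ e)) : ℝ) / (p ^ e : ℝ))
        Filter.atTop (nhds c) ∧
      (N : ℝ) - ∑ i : Fin t, (df i : ℝ) ≤ c := by
  haveI : Fact p.Prime := ⟨hp⟩
  classical
  have hCm : C ≤ mS k N := by
    rw [hC, Ideal.span_le]
    rintro _ ⟨i, rfl⟩
    exact mem_mS_of_isHomogeneous (hfhom i) (hdfpos i)
  set D : ℕ := ∑ i : Fin t, df i with hD
  set T : ℕ → Set ℕ := fun e => {r : ℕ | ¬ (mS k N) ^ r ≤ C ⊔ Jq k N (p ^ e)} with hT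
  set ν : ℕ → ℕ := fun e => sSup (T e) with hν
  have hq1 : ∀ e : ℕ, 0 < p ^ e := fun e => Nat.pow_pos hp.pos
  have hbdd : ∀ e, BddAbove (T e) :=
    fun e => ⟨N * (p ^ e - 1), fun r hr => T_bddAbove (hq1 e) C r hr⟩
  have hnem : ∀ e, (T e).Nonempty := fun e => ⟨0, T_zero_mem (hq1 e) C hCm⟩
  have hmemν : ∀ e, ν e ∈ T e := fun e => Nat.sSup_mem (hnem e) (hbdd e)
  have hstep : ∀ e, (mS k N) ^ (ν e + 1) ≤ C ⊔ Jq k N (p ^ e) := by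
    intro e
    by_contra hcontra
    have : ν e + 1 ≤ ν e := le_csSup (hbdd e) hcontra
    omega
  have hrec : ∀ e, ν (e + 1) + 1 ≤ p * (ν e + 1) + N * (p - 1) := by
    intro e
    have h2 := step_le p (hstep e)
    rw [← pow_succ] at h2
    by_contra hcon
    push_neg at hcon
    exact (hmemν (e + 1)) ((Ideal.pow_le_pow_right (by omega)).trans h2)
  -- lower bound in ℕ / ℝ
  have hlowR : ∀ e, ((N : ℝ) - D) * ((p : ℝ) ^ e - 1) ≤ (ν e : ℝ) := by
    intro e
    rcases le_or_gt D N with hDN | hDN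
    · have hmem : (N - D) * (p ^ e - 1) ∈ T e :=
        lower_bound p f df hdfpos hfhom C hC e (hD ▸ hDN)
      have hle : (N - D) * (p ^ e - 1) ≤ ν e := le_csSup (hbdd e) hmem
      have hcast : (((N - D) * (p ^ e - 1) : ℕ) : ℝ) = ((N : ℝ) - D) * ((p : ℝ) ^ e - 1) := by
        push_cast [Nat.cast_sub hDN, Nat.cast_sub (Nat.one_le_iff_ne_zero.mpr (Nat.pos_iff_ne_zero.mp (hq1 e)))]
        ring
      rw [← hcast]
      exact_mod_cast hle
    · have h1 : ((N : ℝ) - D) ≤ 0 := by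
        have : (N : ℝ) < D := by exact_mod_cast hDN
        linarith
      have h2 : (0:ℝ) ≤ (p : ℝ) ^ e - 1 := by
        have : (1:ℝ) ≤ (p:ℝ) ^ e := by exact_mod_cast Nat.one_le_iff_ne_zero.mpr (Nat.pos_iff_ne_zero.mp (hq1 e))
        linarith
      have := mul_nonpos_of_nonpos_of_nonneg h1 h2
      have h3 : (0:ℝ) ≤ (ν e : ℝ) := Nat.cast_nonneg _
      linarith
  -- analysis
  have hppos : (0 : ℝ) < p := by exact_mod_cast hp.pos
  have hpow : ∀ e : ℕ, (0 : ℝ) < (p : ℝ) ^ e := fun e => pow_pos hppos e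
  set c : ℕ → ℝ := fun e => ((ν e : ℝ) + 1 + N) / (p : ℝ) ^ e with hc
  have hanti : Antitone c := by
    refine antitone_nat_of_succ_le (fun e => ?_)
    have hcst : ((ν (e+1) : ℝ) + 1 + N) ≤ p * ((ν e : ℝ) + 1 + N) := by
      have := hrec e
      have hcst2 : ((ν (e+1) : ℝ)) + 1 ≤ p * ((ν e : ℝ) + 1) + N * ((p:ℝ) - 1) := by
        have hN : ((N * (p - 1) : ℕ) : ℝ) = (N : ℝ) * ((p:ℝ) - 1) := by
          push_cast [Nat.cast_sub hp.one_le]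
          ring
        calc ((ν (e+1) : ℝ)) + 1 ≤ ((p * (ν e + 1) + N * (p - 1) : ℕ) : ℝ) := by exact_mod_cast this
          _ = p * ((ν e : ℝ) + 1) + (N : ℝ) * ((p:ℝ) - 1) := by push_cast [Nat.cast_sub hp.one_le]; ring
      nlinarith [hcst2]
    rw [hc]
    simp only
    rw [pow_succ, div_le_div_iff₀ (by positivity) (by positivity)]
    nlinarith [hpow e, hcst]
  have hbddbelow : BddBelow (Set.range c) := by
    refine ⟨0, ?_⟩
    rintro x ⟨e, rfl⟩
    have : (0:ℝ) ≤ (ν e : ℝ) + 1 + N := by positivity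
    exact div_nonneg this (le_of_lt (hpow e))
  have htendc : Tendsto c atTop (nhds (⨅ e, c e)) := tendsto_atTop_ciInf hanti hbddbelow
  set L : ℝ := ⨅ e, c e with hL
  have hinv : Tendsto (fun e : ℕ => ((p : ℝ)⁻¹) ^ e) atTop (nhds 0) := by
    apply tendsto_pow_atTop_nhds_zero_of_lt_one
    · positivity
    · rw [inv_lt_one_iff₀]
      right
      exact_mod_cast hp.one_lt
  have hsmall : Tendsto (fun e : ℕ => ((1:ℝ) + N) / (p : ℝ) ^ e) atTop (nhds 0) := by
    have h1 : Tendsto (fun e : ℕ => ((1:ℝ) + N) * ((p : ℝ)⁻¹) ^ e) atTop (nhds (((1:ℝ)+N) * 0)) :=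
      hinv.const_mul _
    rw [mul_zero] at h1
    refine h1.congr (fun e => ?_)
    rw [inv_pow, div_eq_mul_inv]
  have hg : Tendsto (fun e : ℕ => (ν e : ℝ) / (p : ℝ) ^ e) atTop (nhds L) := by
    have heq : (fun e : ℕ => (ν e : ℝ) / (p : ℝ) ^ e)
        = fun e => c e - ((1:ℝ) + N) / (p : ℝ) ^ e := by
      funext e
      rw [hc]
      simp only
      field_simp
      ring
    rw [heq, hL]
    simpa using htendc.sub hsmall
  refine ⟨L, ?_, ?_⟩
  · refine hg.congr (fun e => ?_)
    rw [nu_eq p C e]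
  · have hlb : Tendsto (fun e : ℕ => ((N:ℝ) - D) * (1 - ((p:ℝ)⁻¹) ^ e)) atTop
        (nhds (((N:ℝ) - D) * (1 - 0))) := (tendsto_const_nhds.sub hinv).const_mul _
    rw [sub_zero, mul_one] at hlb
    have hcmp : ∀ e : ℕ, ((N:ℝ) - D) * (1 - ((p:ℝ)⁻¹) ^ e) ≤ (ν e : ℝ) / (p : ℝ) ^ e := by
      intro e
      have h1 := hlowR e
      rw [← sub_nonneg]
      have hpe := hpow e
      have heq : (ν e : ℝ) / (p : ℝ) ^ e - ((N:ℝ) - D) * (1 - ((p:ℝ)⁻¹) ^ e)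
          = ((ν e : ℝ) - ((N:ℝ) - D) * ((p:ℝ) ^ e - 1)) / (p : ℝ) ^ e := by
        field_simp
        rw [one_div, inv_pow, mul_assoc, mul_sub, mul_one, mul_sub, mul_left_comm, mul_inv_cancel₀ (ne_of_gt hpe), mul_one]
        ring
      rw [heq]
      apply div_nonneg _ (le_of_lt hpe)
      linarith
    have hfin : (N : ℝ) - D ≤ L := le_of_tendsto_of_tendsto' hlb hg hcmp
    have hDcast : (D : ℝ) = ∑ i : Fin t, (df i : ℝ) := by
      rw [hD]
      push_cast
      rfl
    rw [← hDcast]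
    exact hfin
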